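/- Let z₁ ∈ ℂ with Im(z₁²) ≠ 0 and let Φ = (Φ₁,Φ₂)ᵀ : ℝ → ℂ² be nowhere zero. Define the Bäcklund maps B_q(q,Φ) and B_Φ(Φ) as in the Kaup–Newell Darboux transformation. Then applying the transformation twice returns the original potential: with q⁽¹⁾ = B_q(q,Φ) and Φ⁽¹⁾ = B_Φ(Φ), one has B_q(q⁽¹⁾, Φ⁽¹⁾) = q pointwise. -/

import Mathlib

open Complex

/-- The Bäcklund map on the potential:
`B_q(q,Φ) = ((z|Φ₂|²+\bar z|Φ₁|²)/(z|Φ₁|²+\bar z|Φ₂|²))²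
  (-q + 2i(z²-\bar z²) Φ₁ \barΦ₂ / (z|Φ₂|²+\bar z|Φ₁|²))`. -/
noncomputable def Bq (z q Φ₁ Φ₂ : ℂ) : ℂ :=
  ((z * (‖Φ₂‖ : ℂ) ^ 2 + (starRingEnd ℂ) z * (‖Φ₁‖ : ℂ) ^ 2) /
    (z * (‖Φ₁‖ : ℂ) ^ 2 + (starRingEnd ℂ) z * (‖Φ₂‖ : ℂ) ^ 2)) ^ 2 *
  (-q + 2 * Complex.I * (z ^ 2 - ((starRingEnd ℂ) z) ^ 2) * Φ₁ * (starRingEnd ℂ) Φ₂ /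
      (z * (‖Φ₂‖ : ℂ) ^ 2 + (starRingEnd ℂ) z * (‖Φ₁‖ : ℂ) ^ 2))

/-- First component of the Bäcklund map on the eigenvector. -/
noncomputable def BPhi1 (z Φ₁ Φ₂ : ℂ) : ℂ :=
  (starRingEnd ℂ) Φ₂ / (z * (‖Φ₁‖ : ℂ) ^ 2 + (starRingEnd ℂ) z * (‖Φ₂‖ : ℂ) ^ 2)

/-- Second component of the Bäcklund map on the eigenvector. -/
noncomputable def BPhi2 (z Φ₁ Φ₂ : ℂ) : ℂ :=
  (starRingEnd ℂ) Φ₁ / ((starRingEnd ℂ) z * (‖Φ₁‖ : ℂ) ^ 2 + z * (‖Φ₂‖ : ℂ) ^ 2)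

lemma denom_ne (z : ℂ) (hz : (z ^ 2).im ≠ 0) (f g : ℂ) (hfg : ¬(f = 0 ∧ g = 0)) :
    z * (‖f‖ : ℂ) ^ 2 + (starRingEnd ℂ) z * (‖g‖ : ℂ) ^ 2 ≠ 0 := by
  intro h
  have hz0 : z ≠ 0 := by rintro rfl; simp at hz
  by_cases hf : f = 0
  · have hg : g ≠ 0 := fun hg => hfg ⟨hf, hg⟩
    rw [hf] at h
    simp only [norm_zero, Complex.ofReal_zero, ne_eq, OfNat.ofNat_ne_zero,
      not_false_eq_true, zero_pow, mul_zero, zero_add] at h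
    rcases mul_eq_zero.mp h with h' | h'
    · exact hz0 (by simpa using congrArg (starRingEnd ℂ) h')
    · exact hg (by simpa using h')
  · have h2 : z ^ 2 * ((‖f‖ ^ 2 : ℝ) : ℂ) + (((‖z‖ ^ 2 * ‖g‖ ^ 2 : ℝ)) : ℂ) = 0 := by
      have h3 := congrArg (z * ·) h
      simp only [mul_zero] at h3
      rw [← h3, show z * (z * (‖f‖:ℂ)^2 + (starRingEnd ℂ) z * (‖g‖:ℂ)^2)
          = z^2 * (‖f‖:ℂ)^2 + (z * (starRingEnd ℂ) z) * (‖g‖:ℂ)^2 by ring,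
        Complex.mul_conj']
      push_cast; ring
    have him := congrArg Complex.im h2
    simp only [Complex.add_im, Complex.mul_im, Complex.ofReal_im, Complex.ofReal_re,
      Complex.zero_im, mul_zero, zero_add, add_zero] at him
    rcases mul_eq_zero.mp him with h' | h'
    · exact hz h'
    · exact hf (norm_eq_zero.mp (pow_eq_zero_iff (two_ne_zero) |>.mp h'))


lemma backlund_alg (z w A B F G qv : ℂ) (hD1 : z * A + w * B ≠ 0)
    (hD2 : z * B + w * A ≠ 0) :
    (1 / (z * B + w * A) / (1 / (z * A + w * B))) ^ 2 *
      (-(((z * B + w * A) / (z * A + w * B)) ^ 2 *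
          (-qv + 2 * Complex.I * (z ^ 2 - w ^ 2) * F * G / (z * B + w * A)))
        + 2 * Complex.I * (z ^ 2 - w ^ 2) * (G / (z * A + w * B)) *
            (F / (z * A + w * B)) / (1 / (z * B + w * A))) = qv := by
  set D1 := z * A + w * B with hd1
  set D2 := z * B + w * A with hd2
  clear_value D1 D2
  field_simp
  ring

set_option maxHeartbeats 1000000 in
/-- The Bäcklund transformation is an involution on the potential. -/
theorem backlund_involution (z₁ : ℂ) (hz₁ : (z₁ ^ 2).im ≠ 0)
    (q Φ₁ Φ₂ : ℝ → ℂ) (hnz : ∀ x : ℝ, ¬(Φ₁ x = 0 ∧ Φ₂ x = 0)) :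
    ∀ x : ℝ,
      Bq z₁ (Bq z₁ (q x) (Φ₁ x) (Φ₂ x))
        (BPhi1 z₁ (Φ₁ x) (Φ₂ x)) (BPhi2 z₁ (Φ₁ x) (Φ₂ x)) = q x := by
  intro x
  set f := Φ₁ x with hf
  set g := Φ₂ x with hg
  have hzc2 : (((starRingEnd ℂ) z₁) ^ 2).im ≠ 0 := by
    rw [← map_pow]
    simp only [Complex.conj_im]
    exact neg_ne_zero.mpr hz₁
  have hD1 : z₁ * (‖f‖ : ℂ) ^ 2 + (starRingEnd ℂ) z₁ * (‖g‖ : ℂ) ^ 2 ≠ 0 :=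
    denom_ne z₁ hz₁ f g (hnz x)
  have hD2 : z₁ * (‖g‖ : ℂ) ^ 2 + (starRingEnd ℂ) z₁ * (‖f‖ : ℂ) ^ 2 ≠ 0 :=
    denom_ne z₁ hz₁ g f (fun h => hnz x ⟨h.2, h.1⟩)
  have hD1' : (starRingEnd ℂ) z₁ * (‖f‖ : ℂ) ^ 2 + z₁ * (‖g‖ : ℂ) ^ 2 ≠ 0 := by
    rw [add_comm]; exact hD2
  -- norms of the transformed eigenvector
  have hn1 : (‖BPhi1 z₁ f g‖ : ℂ) ^ 2
      = (‖g‖:ℂ)^2 / ((z₁ * (‖f‖ : ℂ) ^ 2 + (starRingEnd ℂ) z₁ * (‖g‖ : ℂ) ^ 2)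
        * (z₁ * (‖g‖ : ℂ) ^ 2 + (starRingEnd ℂ) z₁ * (‖f‖ : ℂ) ^ 2)) := by
    rw [BPhi1, norm_div]
    push_cast
    rw [div_pow, show ((‖z₁ * (‖f‖:ℂ)^2 + (starRingEnd ℂ) z₁ * (‖g‖:ℂ)^2‖ : ℂ))^2
        = (z₁ * (‖f‖:ℂ)^2 + (starRingEnd ℂ) z₁ * (‖g‖:ℂ)^2)
          * (starRingEnd ℂ) (z₁ * (‖f‖:ℂ)^2 + (starRingEnd ℂ) z₁ * (‖g‖:ℂ)^2) by
        rw [Complex.mul_conj']]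
    simp only [map_add, map_mul, Complex.conj_conj, map_pow, Complex.conj_ofReal]
    rw [RCLike.norm_conj]
    ring_nf
  have hn2 : (‖BPhi2 z₁ f g‖ : ℂ) ^ 2
      = (‖f‖:ℂ)^2 / ((z₁ * (‖f‖ : ℂ) ^ 2 + (starRingEnd ℂ) z₁ * (‖g‖ : ℂ) ^ 2)
        * (z₁ * (‖g‖ : ℂ) ^ 2 + (starRingEnd ℂ) z₁ * (‖f‖ : ℂ) ^ 2)) := by
    rw [BPhi2, norm_div]
    push_cast
    rw [div_pow, show ((‖(starRingEnd ℂ) z₁ * (‖f‖:ℂ)^2 + z₁ * (‖g‖:ℂ)^2‖ : ℂ))^2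
        = ((starRingEnd ℂ) z₁ * (‖f‖:ℂ)^2 + z₁ * (‖g‖:ℂ)^2)
          * (starRingEnd ℂ) ((starRingEnd ℂ) z₁ * (‖f‖:ℂ)^2 + z₁ * (‖g‖:ℂ)^2) by
        rw [Complex.mul_conj']]
    simp only [map_add, map_mul, Complex.conj_conj, map_pow, Complex.conj_ofReal]
    rw [RCLike.norm_conj]
    ring_nf
  have e1 : z₁ * ((‖f‖:ℂ)^2 / ((z₁ * (‖f‖ : ℂ) ^ 2 + (starRingEnd ℂ) z₁ * (‖g‖ : ℂ) ^ 2)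
        * (z₁ * (‖g‖ : ℂ) ^ 2 + (starRingEnd ℂ) z₁ * (‖f‖ : ℂ) ^ 2)))
      + (starRingEnd ℂ) z₁ * ((‖g‖:ℂ)^2 / ((z₁ * (‖f‖ : ℂ) ^ 2 + (starRingEnd ℂ) z₁ * (‖g‖ : ℂ) ^ 2)
        * (z₁ * (‖g‖ : ℂ) ^ 2 + (starRingEnd ℂ) z₁ * (‖f‖ : ℂ) ^ 2)))
      = 1 / (z₁ * (‖g‖ : ℂ) ^ 2 + (starRingEnd ℂ) z₁ * (‖f‖ : ℂ) ^ 2) := by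
    rw [← mul_div_assoc, ← mul_div_assoc, ← add_div, div_mul_cancel_left₀ hD1, one_div]
  have e2 : z₁ * ((‖g‖:ℂ)^2 / ((z₁ * (‖f‖ : ℂ) ^ 2 + (starRingEnd ℂ) z₁ * (‖g‖ : ℂ) ^ 2)
        * (z₁ * (‖g‖ : ℂ) ^ 2 + (starRingEnd ℂ) z₁ * (‖f‖ : ℂ) ^ 2)))
      + (starRingEnd ℂ) z₁ * ((‖f‖:ℂ)^2 / ((z₁ * (‖f‖ : ℂ) ^ 2 + (starRingEnd ℂ) z₁ * (‖g‖ : ℂ) ^ 2)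
        * (z₁ * (‖g‖ : ℂ) ^ 2 + (starRingEnd ℂ) z₁ * (‖f‖ : ℂ) ^ 2)))
      = 1 / (z₁ * (‖f‖ : ℂ) ^ 2 + (starRingEnd ℂ) z₁ * (‖g‖ : ℂ) ^ 2) := by
    rw [← mul_div_assoc, ← mul_div_assoc, ← add_div,
      show z₁ * (‖g‖:ℂ)^2 + (starRingEnd ℂ) z₁ * (‖f‖:ℂ)^2
        = (z₁ * (‖g‖:ℂ)^2 + (starRingEnd ℂ) z₁ * (‖f‖:ℂ)^2) from rfl,
      mul_comm (z₁ * (‖f‖:ℂ)^2 + (starRingEnd ℂ) z₁ * (‖g‖:ℂ)^2),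
      div_mul_cancel_left₀ hD2, one_div]
  rw [Bq, Bq, hn1, hn2, BPhi1, BPhi2]
  simp only [map_div₀, map_mul, map_add, map_pow, Complex.conj_conj, Complex.conj_ofReal]
  rw [e1, e2]
  exact backlund_alg z₁ ((starRingEnd ℂ) z₁) ((‖f‖ : ℂ) ^ 2) ((‖g‖ : ℂ) ^ 2)
    f ((starRingEnd ℂ) g) (q x) hD1 hD2
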